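/- Let n be an odd positive integer and A = {1, ..., n} ⊆ ℤ. For every integer x, the number of ordered triples (y₁, y₂, y₃) ∈ A³ with y₁ + y₂ + y₃ = x is at most (3n² + 1)/4. -/

import Mathlib

lemma sumAbs (m : ℕ) : ∑ j ∈ Finset.Icc (-(m:ℤ)) m, |j| = m * (m+1) := by
  induction m with
  | zero => simp
  | succ k ih =>
    have h1 : Finset.Icc (-(k+1:ℤ)) ((k:ℤ)+1)
        = insert (-((k:ℤ)+1)) (insert ((k:ℤ)+1) (Finset.Icc (-(k:ℤ)) k)) := by
      ext z; simp only [Finset.mem_Icc, Finset.mem_insert]; omega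
    push_cast
    rw [h1, Finset.sum_insert (by simp only [Finset.mem_insert, Finset.mem_Icc]; omega),
      Finset.sum_insert (by simp only [Finset.mem_Icc]; omega), ih]
    have hk : (0:ℤ) ≤ (k:ℤ) := Int.natCast_nonneg k
    rw [abs_of_nonpos (by linarith), abs_of_nonneg (by linarith)]
    ring

lemma absLin (m : ℕ) :
    ∑ a ∈ Finset.Icc (1:ℤ) (2*m+1), |2*a - (2*(m:ℤ)+1) - 1| = 2*(m*(m+1)) := by
  have hmap : Finset.Icc (1:ℤ) (2*m+1)
      = Finset.map (addLeftEmbedding ((m:ℤ)+1)) (Finset.Icc (-(m:ℤ)) m) := by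
    rw [Finset.map_add_left_Icc]; congr 1 <;> ring
  rw [hmap, Finset.sum_map]
  have : ∀ j ∈ Finset.Icc (-(m:ℤ)) m,
      |2*(addLeftEmbedding ((m:ℤ)+1) j) - (2*(m:ℤ)+1) - 1| = 2 * |j| := by
    intro j _
    simp only [addLeftEmbedding_apply]
    rw [show 2*((m:ℤ)+1+j) - (2*(m:ℤ)+1) - 1 = 2*j by ring, abs_mul]
    norm_num
  rw [Finset.sum_congr rfl this, ← Finset.mul_sum, sumAbs]

lemma pairBound (n c a : ℤ) (h1 : 1 ≤ a) (h2 : a ≤ n) :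
    max 0 (n - |a - c|) + max 0 (n - |n+1-a-c|) ≤ 2*n - |2*a-n-1| := by
  have tri : |2*a-n-1| ≤ |a-c| + |n+1-a-c| := by
    have h := abs_sub (a - c) (n + 1 - a - c)
    rw [show a - c - (n+1-a-c) = 2*a-n-1 by ring] at h
    exact h
  have hw : |2*a-n-1| ≤ n - 1 := abs_le.mpr ⟨by omega, by omega⟩
  have u0 : 0 ≤ |a-c| := abs_nonneg _
  have v0 : 0 ≤ |n+1-a-c| := abs_nonneg _
  rcases max_choice 0 (n - |a-c|) with h | h <;>
    rcases max_choice 0 (n - |n+1-a-c|) with h' | h' <;> rw [h, h'] <;> linarith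

lemma windowSum (m : ℕ) (c : ℤ) :
    ∑ a ∈ Finset.Icc (1:ℤ) (2*m+1), max 0 ((2*(m:ℤ)+1) - |a - c|)
      ≤ 3*(m:ℤ)^2 + 3*m + 1 := by
  set n : ℤ := 2*(m:ℤ)+1 with hn
  set F : ℤ → ℤ := fun a => max 0 (n - |a - c|) with hF
  have hrefl : ∑ a ∈ Finset.Icc (1:ℤ) n, F a
      = ∑ a ∈ Finset.Icc (1:ℤ) n, F (n+1-a) := by
    refine Finset.sum_nbij' (i := fun a => n+1-a) (j := fun a => n+1-a) ?_ ?_ ?_ ?_ ?_ <;>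
      intro a ha <;> simp only [Finset.mem_Icc] at * <;>
      first
        | omega
        | rw [show n+1-(n+1-a) = a by ring]
  have h2 : 2 * ∑ a ∈ Finset.Icc (1:ℤ) n, F a
      = ∑ a ∈ Finset.Icc (1:ℤ) n, (F a + F (n+1-a)) := by
    rw [Finset.sum_add_distrib, ← hrefl]; ring
  have h3 : ∑ a ∈ Finset.Icc (1:ℤ) n, (F a + F (n+1-a))
      ≤ ∑ a ∈ Finset.Icc (1:ℤ) n, (2*n - |2*a-n-1|) := by
    apply Finset.sum_le_sum
    intro a ha
    rw [Finset.mem_Icc] at ha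
    exact pairBound n c a ha.1 ha.2
  have h4 : ∑ a ∈ Finset.Icc (1:ℤ) n, (2*n - |2*a-n-1|)
      = 2*n*n - 2*(m*(m+1)) := by
    rw [Finset.sum_sub_distrib, absLin, Finset.sum_const, Int.card_Icc]
    have : ((n + 1 - 1).toNat : ℤ) = n := by omega
    rw [show (n + 1 - 1).toNat • (2*n) = ((n + 1 - 1).toNat : ℤ) * (2*n) by
      simp [nsmul_eq_mul], this]
    ring
  nlinarith [h2, h3, h4]

lemma innerBound (n x a : ℤ) :
    ((((Finset.Icc (1:ℤ) n) ×ˢ (Finset.Icc (1:ℤ) n)).filter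
        (fun p => a + p.1 + p.2 = x)).card : ℤ)
      ≤ max 0 (n - |a - (x - n - 1)|) := by
  have hsub : (((Finset.Icc (1:ℤ) n) ×ˢ (Finset.Icc (1:ℤ) n)).filter
      (fun p => a + p.1 + p.2 = x)).card
      ≤ (Finset.Icc (max 1 (x-a-n)) (min n (x-a-1))).card := by
    apply Finset.card_le_card_of_injOn (fun p => p.1)
    · intro p hp
      simp only [Finset.mem_coe, Finset.mem_filter, Finset.mem_product, Finset.mem_Icc] at hp ⊢
      omega
    · intro p hp q hq hpq
      simp only [Finset.mem_coe, Finset.mem_filter] at hp hq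
      dsimp only at hpq
      have h1 := hp.2
      have h2 := hq.2
      have : p.2 = q.2 := by omega
      exact Prod.ext hpq this
  have hc : ((Finset.Icc (max 1 (x-a-n)) (min n (x-a-1))).card : ℤ)
      = max 0 (min n (x-a-1) + 1 - max 1 (x-a-n)) := by
    rw [Int.card_Icc]
    omega
  calc ((((Finset.Icc (1:ℤ) n) ×ˢ (Finset.Icc (1:ℤ) n)).filter
        (fun p => a + p.1 + p.2 = x)).card : ℤ)
      ≤ ((Finset.Icc (max 1 (x-a-n)) (min n (x-a-1))).card : ℤ) := by exact_mod_cast hsub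
    _ = max 0 (min n (x-a-1) + 1 - max 1 (x-a-n)) := hc
    _ ≤ max 0 (n - |a - (x - n - 1)|) := by
        rcases abs_cases (a - (x - n - 1)) with ⟨h, _⟩ | ⟨h, _⟩ <;> rw [h] <;> omega

theorem stmt_1 (n : ℤ) (hn : 0 < n) (hodd : Odd n) (x : ℤ) :
    (((Finset.Icc (1:ℤ) n ×ˢ Finset.Icc (1:ℤ) n ×ˢ Finset.Icc (1:ℤ) n).filter
        (fun t => t.1 + t.2.1 + t.2.2 = x)).card : ℤ)
      ≤ (3 * n ^ 2 + 1) / 4 := by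
  obtain ⟨k, hk⟩ := hodd
  have hk0 : 0 ≤ k := by omega
  set m : ℕ := k.toNat with hm
  have hnm : n = 2*(m:ℤ) + 1 := by omega
  have key : ((Finset.Icc (1:ℤ) n ×ˢ Finset.Icc (1:ℤ) n ×ˢ Finset.Icc (1:ℤ) n).filter
        (fun t => t.1 + t.2.1 + t.2.2 = x)).card
      = ∑ a ∈ Finset.Icc (1:ℤ) n,
          (((Finset.Icc (1:ℤ) n) ×ˢ (Finset.Icc (1:ℤ) n)).filter
            (fun p => a + p.1 + p.2 = x)).card := by
    rw [Finset.card_filter, Finset.sum_product]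
    refine Finset.sum_congr rfl fun a _ => ?_
    rw [Finset.card_filter]
  rw [key]
  push_cast
  calc (∑ a ∈ Finset.Icc (1:ℤ) n,
          ((((Finset.Icc (1:ℤ) n) ×ˢ (Finset.Icc (1:ℤ) n)).filter
            (fun p => a + p.1 + p.2 = x)).card : ℤ))
      ≤ ∑ a ∈ Finset.Icc (1:ℤ) n, max 0 (n - |a - (x - n - 1)|) :=
        Finset.sum_le_sum fun a _ => innerBound n x a
    _ ≤ 3*(m:ℤ)^2 + 3*m + 1 := by
        rw [hnm]; exact windowSum m (x - (2*(m:ℤ)+1) - 1)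
    _ = (3 * n ^ 2 + 1) / 4 := by
        have h4 : 3 * n ^ 2 + 1 = 4 * (3*(m:ℤ)^2 + 3*m + 1) := by rw [hnm]; ring
        rw [h4, Int.mul_ediv_cancel_left _ (by norm_num)]
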